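/- The orbit space of the upper half-plane ℍ by the cyclic subgroup of SL(2,ℝ) generated by the single hyperbolic element M(3/2, 1/12) = !![−18, 323/12; 12, −18], equipped with the quotient topology, is homeomorphic to the punctured complex plane ℂ \ {0} (a cylinder). -/

import Mathlib

open UpperHalfPlane MatrixGroups

noncomputable section

/-- `N(β,β',r)` is the element of `SL(2,ℝ)` whose Möbius transformation has isometric circle
the half-circle of radius `r` centered at `β`, mapped onto the half-circle of radius `r`
centered at `β'`. -/
def Nmat (β β' r : ℝ) (hr : r ≠ 0) : SL(2, ℝ) :=
  ⟨!![β' / r, -(β * β' + r ^ 2) / r; 1 / r, -β / r], by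
    rw [Matrix.det_fin_two_of]; field_simp; ring⟩

/-- `M(α,r) := N(α, −α, r)`. -/
def Mmat (a r : ℝ) (hr : r ≠ 0) : SL(2, ℝ) := Nmat a (-a) r hr

/-- The hyperbolic element `M(3/2, 1/12)`. -/
def g₀ : SL(2, ℝ) := Mmat (3 / 2) (1 / 12) (by norm_num)

/-- The orbit space of `ℍ` by the cyclic subgroup generated by `M(3/2, 1/12)`, with the
quotient topology. -/
abbrev Cyl := Quotient (MulAction.orbitRel (Subgroup.zpowers g₀) ℍ)

namespace Stmt19

open Complex Set

lemma g0_coe : (g₀ : Matrix (Fin 2) (Fin 2) ℝ) = !![(-18 : ℝ), 323 / 12; 12, -18] := by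
  show (!![(-(3/2:ℝ)) / (1/12), -((3/2) * (-(3/2)) + (1/12) ^ 2) / (1/12);
      1 / (1/12), -(3/2) / (1/12)] : Matrix (Fin 2) (Fin 2) ℝ) = _
  norm_num

/-! ### Diagonalization data -/

def pp : ℝ := Real.sqrt 323 / 12

def cc : ℝ := Real.sqrt (2 * pp)

def ss : ℝ := -(18 + Real.sqrt 323)

lemma sqrt323_pos : 0 < Real.sqrt 323 := Real.sqrt_pos.2 (by norm_num)

lemma sq_sqrt323 : Real.sqrt 323 ^ 2 = 323 := Real.sq_sqrt (by norm_num)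

lemma pp_pos : 0 < pp := div_pos sqrt323_pos (by norm_num)

lemma cc_pos : 0 < cc := Real.sqrt_pos.2 (by have := pp_pos; linarith)

lemma cc_sq : cc ^ 2 = 2 * pp := Real.sq_sqrt (by have := pp_pos; linarith)

lemma ss_neg : ss < 0 := by
  have := sqrt323_pos; unfold ss; linarith

lemma ss_ne : ss ≠ 0 := ne_of_lt ss_neg

lemma ss_inv : ss⁻¹ = Real.sqrt 323 - 18 :=
  inv_eq_of_mul_eq_one_right (by unfold ss; nlinarith [sq_sqrt323])

/-- The conjugating matrix. -/
def Hm : SL(2, ℝ) :=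
  ⟨!![1 / cc, -pp / cc; 1 / cc, pp / cc], by
    rw [Matrix.det_fin_two_of]
    have h1 := cc_sq
    have h2 := cc_pos.ne'
    field_simp
    linarith⟩

/-- The diagonal matrix. -/
def Dm : SL(2, ℝ) :=
  ⟨!![ss, 0; 0, ss⁻¹], by
    rw [Matrix.det_fin_two_of]
    simp [mul_inv_cancel₀ ss_ne]⟩

lemma Hm_coe : (Hm : Matrix (Fin 2) (Fin 2) ℝ) = !![1 / cc, -pp / cc; 1 / cc, pp / cc] := rfl

lemma Dm_coe : (Dm : Matrix (Fin 2) (Fin 2) ℝ) = !![ss, 0; 0, ss⁻¹] := rfl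

def lam : ℝ := ss ^ 2

def Lp : ℝ := Real.log lam

lemma lam_gt_one : 1 < lam := by
  have := sqrt323_pos; unfold lam ss; nlinarith

lemma lam_pos : 0 < lam := lt_trans one_pos lam_gt_one

lemma Lp_pos : 0 < Lp := Real.log_pos lam_gt_one

lemma Lp_ne : Lp ≠ 0 := ne_of_gt Lp_pos

lemma conj_eq : Hm * g₀ = Dm * Hm := by
  have hcc := cc_pos.ne'
  apply Subtype.ext
  rw [Matrix.SpecialLinearGroup.coe_mul, Matrix.SpecialLinearGroup.coe_mul,
    g0_coe, Hm_coe, Dm_coe, Matrix.mul_fin_two, Matrix.mul_fin_two, ss_inv]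
  ext i j
  fin_cases i <;> fin_cases j <;>
    simp only [Matrix.cons_val', Matrix.cons_val_zero, Matrix.cons_val_one, Matrix.head_cons,
      Matrix.empty_val', Matrix.cons_val_fin_one, Matrix.head_fin_const, Matrix.of_apply,
      Fin.zero_eta, Fin.mk_one] <;>
    simp only [pp, ss] <;> field_simp <;>
    first
      | linear_combination ((144 : ℝ)*cc^2) * sq_sqrt323
      | linear_combination ((288 : ℝ)*cc^2) * sq_sqrt323
      | linear_combination ((-144 : ℝ)*cc^2) * sq_sqrt323
      | linear_combination ((-288 : ℝ)*cc^2) * sq_sqrt323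
      | linear_combination (-1 : ℝ) * sq_sqrt323
      | ring

/-! ### Action formulas -/

lemma smul_coe (g : SL(2, ℝ)) (z : ℍ) :
    ((g • z : ℍ) : ℂ) =
      ((g : Matrix (Fin 2) (Fin 2) ℝ) 0 0 * z + (g : Matrix (Fin 2) (Fin 2) ℝ) 0 1) /
      ((g : Matrix (Fin 2) (Fin 2) ℝ) 1 0 * z + (g : Matrix (Fin 2) (Fin 2) ℝ) 1 1) := by
  rw [UpperHalfPlane.specialLinearGroup_apply]
  simp [UpperHalfPlane.coe_mk]

lemma Dm_smul (z : ℍ) : ((Dm • z : ℍ) : ℂ) = ((lam : ℝ) : ℂ) * z := by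
  rw [smul_coe, Dm_coe]
  have hz : (z : ℂ) ≠ 0 := UpperHalfPlane.ne_zero z
  have hs : ((ss : ℝ) : ℂ) ≠ 0 := by exact_mod_cast ss_ne
  simp only [Matrix.cons_val', Matrix.cons_val_zero, Matrix.cons_val_one, Matrix.head_cons,
    Matrix.empty_val', Matrix.cons_val_fin_one, Matrix.head_fin_const, Matrix.of_apply]
  push_cast
  field_simp
  unfold lam
  push_cast
  ring

lemma Dm_inv_smul (z : ℍ) : ((Dm⁻¹ • z : ℍ) : ℂ) = ((lam⁻¹ : ℝ) : ℂ) * z := by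
  have h := Dm_smul (Dm⁻¹ • z)
  rw [smul_inv_smul] at h
  have hl : ((lam : ℝ) : ℂ) ≠ 0 := by exact_mod_cast lam_pos.ne'
  push_cast at h ⊢
  rw [eq_comm, inv_mul_eq_iff_eq_mul₀ hl]
  exact h

/-! ### Polar coordinates on ℍ -/

lemma arg_mem (z : ℍ) : Complex.arg (z : ℂ) ∈ Set.Ioo (0 : ℝ) Real.pi := by
  have him : (z : ℂ).im ≠ 0 := ne_of_gt z.im_pos
  constructor
  · rcases lt_or_eq_of_le (Complex.arg_nonneg_iff.2 (le_of_lt z.im_pos)) with h | h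
    · exact h
    · exact absurd ((Complex.arg_eq_zero_iff).1 h.symm).2 him
  · rcases lt_or_eq_of_le (Complex.arg_le_pi (z : ℂ)) with h | h
    · exact h
    · exact absurd ((Complex.arg_eq_pi_iff).1 h).2 him

def polar : ℍ ≃ₜ ℝ × (Set.Ioo (0 : ℝ) Real.pi) where
  toFun z := (Real.log (‖(z : ℂ)‖), ⟨Complex.arg (z : ℂ), arg_mem z⟩)
  invFun p := ⟨Complex.exp (p.1 + p.2.1 * Complex.I), by
    rw [Complex.exp_im]
    simp only [Complex.add_re, Complex.ofReal_re, Complex.mul_re, Complex.I_re,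
      Complex.ofReal_im, Complex.I_im, Complex.add_im, Complex.mul_im, mul_zero, mul_one,
      zero_sub, sub_zero, zero_add, zero_mul, neg_zero, add_zero]
    exact mul_pos (Real.exp_pos _) (Real.sin_pos_of_pos_of_lt_pi p.2.2.1 p.2.2.2)⟩
  left_inv z := by
    apply UpperHalfPlane.ext
    show Complex.exp (Real.log (‖(z : ℂ)‖) + Complex.arg (z : ℂ) * Complex.I) = z
    rw [Complex.exp_add, ← Complex.ofReal_exp,
      Real.exp_log (norm_pos_iff.mpr (UpperHalfPlane.ne_zero z))]
    exact Complex.norm_mul_exp_arg_mul_I (z : ℂ)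
  right_inv p := by
    obtain ⟨u, θ, hθ⟩ := p
    have h1 : Complex.exp ((u : ℂ) + θ * Complex.I)
        = ((Real.exp u : ℝ) : ℂ) * Complex.exp (θ * Complex.I) := by
      rw [Complex.exp_add, Complex.ofReal_exp]
    have habs : ‖Complex.exp ((u : ℂ) + θ * Complex.I)‖ = Real.exp u := by
      rw [Complex.norm_exp]; simp
    have harg : Complex.arg (Complex.exp ((u : ℂ) + θ * Complex.I)) = θ := by
      rw [h1, Complex.arg_real_mul _ (Real.exp_pos u), Complex.exp_mul_I,
        Complex.arg_cos_add_sin_mul_I ⟨by linarith [hθ.1, Real.pi_pos], hθ.2.le⟩]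
    refine Prod.ext ?_ (Subtype.ext ?_)
    · show Real.log (‖Complex.exp _‖) = u
      rw [habs, Real.log_exp]
    · exact harg
  continuous_toFun := by
    apply Continuous.prodMk
    · refine Real.continuousOn_log.comp_continuous
        (continuous_norm.comp UpperHalfPlane.continuous_coe) (fun z => ?_)
      simp only [Set.mem_compl_iff, Set.mem_singleton_iff, Function.comp_apply]
      exact (norm_pos_iff.mpr (UpperHalfPlane.ne_zero z)).ne'
    · apply Continuous.subtype_mk
      rw [continuous_iff_continuousAt]
      intro z
      have h1 : (z : ℂ) ∈ Complex.slitPlane :=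
        Complex.mem_slitPlane_iff.2 (Or.inr (ne_of_gt z.im_pos))
      exact (Complex.continuousAt_arg h1).comp UpperHalfPlane.continuous_coe.continuousAt
  continuous_invFun := by
    refine UpperHalfPlane.isEmbedding_coe.continuous_iff.2 ?_
    show Continuous fun p : ℝ × Set.Ioo (0 : ℝ) Real.pi => Complex.exp (p.1 + p.2.1 * Complex.I)
    apply Complex.continuous_exp.comp
    exact (Complex.continuous_ofReal.comp continuous_fst).add
      (((Complex.continuous_ofReal.comp (continuous_subtype_val.comp continuous_snd))).mul
        continuous_const)

instance : ContinuousConstSMul SL(2, ℝ) ℍ :=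
  ⟨fun g => (isometry_smul ℍ g).continuous⟩

/-- The full coordinate map. -/
def Φ : ℍ ≃ₜ ℝ × (Set.Ioo (0 : ℝ) Real.pi) :=
  (Homeomorph.smul Hm).trans polar

lemma polar_scale {w w' : ℍ} {a : ℝ} (ha : 0 < a) (h : (w' : ℂ) = (a : ℂ) * w) :
    polar w' = ((polar w).1 + Real.log a, (polar w).2) := by
  have habs : ‖(w' : ℂ)‖ = a * ‖(w : ℂ)‖ := by
    rw [h, norm_mul, Complex.norm_real, Real.norm_of_nonneg ha.le]
  have habs0 : (0 : ℝ) < ‖(w : ℂ)‖ := norm_pos_iff.mpr (UpperHalfPlane.ne_zero w)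
  refine Prod.ext ?_ (Subtype.ext ?_)
  · show Real.log (‖(w' : ℂ)‖) = Real.log (‖(w : ℂ)‖) + Real.log a
    rw [habs, Real.log_mul ha.ne' habs0.ne', add_comm]
  · show Complex.arg (w' : ℂ) = Complex.arg (w : ℂ)
    rw [h, Complex.arg_real_mul _ ha]

lemma step_up (z : ℍ) : Φ (g₀ • z) = ((Φ z).1 + Lp, (Φ z).2) := by
  have h1 : Hm • g₀ • z = Dm • (Hm • z) := by
    rw [← mul_smul, conj_eq, mul_smul]
  show polar (Hm • (g₀ • z)) = _
  rw [h1, polar_scale lam_pos (Dm_smul (Hm • z))]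
  rfl

lemma step_down (z : ℍ) : Φ (g₀⁻¹ • z) = ((Φ z).1 - Lp, (Φ z).2) := by
  have hc : Hm * g₀⁻¹ = Dm⁻¹ * Hm := by
    have h := conj_eq
    calc Hm * g₀⁻¹ = Dm⁻¹ * (Dm * Hm) * g₀⁻¹ := by group
    _ = Dm⁻¹ * (Hm * g₀) * g₀⁻¹ := by rw [← h]
    _ = Dm⁻¹ * Hm := by group
  have h1 : Hm • g₀⁻¹ • z = Dm⁻¹ • (Hm • z) := by
    rw [← mul_smul, hc, mul_smul]
  show polar (Hm • (g₀⁻¹ • z)) = _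
  rw [h1, polar_scale (inv_pos.2 lam_pos) (Dm_inv_smul (Hm • z)), Real.log_inv]
  show (_ + -Real.log lam, _) = _
  rw [← sub_eq_add_neg]
  rfl

lemma key (n : ℤ) (z : ℍ) : Φ (g₀ ^ n • z) = ((Φ z).1 + n * Lp, (Φ z).2) := by
  induction n using Int.induction_on with
  | zero => simp
  | succ k ih =>
    have h1 : g₀ ^ ((k : ℤ) + 1) • z = g₀ • (g₀ ^ (k : ℤ) • z) := by
      rw [← mul_smul, ← zpow_one_add, add_comm]
    rw [h1, step_up, ih, Prod.mk.injEq]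
    constructor
    · push_cast; ring
    · rfl
  | pred k ih =>
    have h1 : g₀ ^ (-(k : ℤ) - 1) • z = g₀⁻¹ • (g₀ ^ (-(k : ℤ)) • z) := by
      rw [← mul_smul, ← zpow_neg_one, ← zpow_add]; ring_nf
    rw [h1, step_down, ih, Prod.mk.injEq]
    constructor
    · push_cast; ring
    · rfl

lemma orbit_iff (x y : ℍ) :
    (MulAction.orbitRel (Subgroup.zpowers g₀) ℍ).r x y ↔ ∃ n : ℤ, g₀ ^ n • y = x := by
  constructor
  · rintro ⟨⟨g, hg⟩, rfl⟩
    obtain ⟨n, rfl⟩ := (Subgroup.mem_zpowers_iff).1 hg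
    exact ⟨n, rfl⟩
  · rintro ⟨n, rfl⟩
    exact ⟨⟨g₀ ^ n, Subgroup.zpow_mem (Subgroup.zpowers g₀) (Subgroup.mem_zpowers g₀) n⟩, rfl⟩

/-! ### The quotient homeomorphism -/

def f₁ : ℍ → AddCircle Lp × (Set.Ioo (0 : ℝ) Real.pi) :=
  fun z => (((Φ z).1 : AddCircle Lp), (Φ z).2)

lemma f₁_welldef : ∀ x y : ℍ,
    (MulAction.orbitRel (Subgroup.zpowers g₀) ℍ).r x y → f₁ x = f₁ y := by
  intro x y h
  obtain ⟨n, rfl⟩ := (orbit_iff x y).1 h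
  unfold f₁
  rw [key, Prod.mk.injEq]
  refine ⟨?_, rfl⟩
  show (((Φ y).1 + n * Lp : ℝ) : AddCircle Lp) = ((Φ y).1 : AddCircle Lp)
  rw [QuotientAddGroup.eq]
  refine ⟨-n, ?_⟩
  show (-n : ℤ) • Lp = -((Φ y).1 + n * Lp) + (Φ y).1
  rw [zsmul_eq_mul]
  push_cast
  ring

def Fc : Cyl → AddCircle Lp × (Set.Ioo (0 : ℝ) Real.pi) :=
  Quotient.lift f₁ f₁_welldef

lemma Fc_cont : Continuous Fc := by
  apply Continuous.quotient_lift
  apply Continuous.prodMk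
  · exact (QuotientAddGroup.isOpenQuotientMap_mk).continuous.comp
      ((continuous_fst.comp Φ.continuous))
  · exact continuous_snd.comp Φ.continuous

def g₂ : ℝ × (Set.Ioo (0 : ℝ) Real.pi) → Cyl :=
  fun p => Quotient.mk (MulAction.orbitRel (Subgroup.zpowers g₀) ℍ) (Φ.symm p)

lemma g₂_welldef (v : (Set.Ioo (0 : ℝ) Real.pi)) (u u' : ℝ)
    (h : (QuotientAddGroup.leftRel (AddSubgroup.zmultiples Lp)).r u u') :
    g₂ (u, v) = g₂ (u', v) := by
  rw [QuotientAddGroup.leftRel_apply] at h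
  obtain ⟨n, hn⟩ := h
  have hn' : (n : ℝ) * Lp = -u + u' := by rw [← zsmul_eq_mul]; exact hn
  have hu' : u' = u + n * Lp := by linarith
  set z := Φ.symm (u, v) with hz
  have hΦz : Φ z = (u, v) := Φ.apply_symm_apply (u, v)
  have h2 : Φ (g₀ ^ n • z) = (u', v) := by
    rw [key, hΦz, hu']
  have h3 : Φ.symm (u', v) = g₀ ^ n • z := by
    rw [← h2, Φ.symm_apply_apply]
  unfold g₂
  rw [h3]
  refine Quotient.sound ((orbit_iff _ _).2 ⟨-n, ?_⟩)
  rw [← mul_smul, ← zpow_add]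
  simp [hz]

def Gc : AddCircle Lp × (Set.Ioo (0 : ℝ) Real.pi) → Cyl :=
  fun q => Quotient.liftOn' q.1 (fun u => g₂ (u, q.2)) (fun u u' h => g₂_welldef q.2 u u' h)

lemma Gc_mk (u : ℝ) (v : (Set.Ioo (0 : ℝ) Real.pi)) :
    Gc ((u : AddCircle Lp), v) = g₂ (u, v) := rfl

lemma Gc_cont : Continuous Gc := by
  have hq : IsOpenQuotientMap
      (Prod.map (QuotientAddGroup.mk : ℝ → AddCircle Lp)
        (id : (Set.Ioo (0 : ℝ) Real.pi) → (Set.Ioo (0 : ℝ) Real.pi))) :=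
    (QuotientAddGroup.isOpenQuotientMap_mk).prodMap IsOpenQuotientMap.id
  rw [← hq.continuous_comp_iff]
  have heq : (Gc ∘ Prod.map (QuotientAddGroup.mk : ℝ → AddCircle Lp) id) = g₂ := by
    funext p
    exact Gc_mk p.1 p.2
  rw [heq]
  exact continuous_quotient_mk'.comp Φ.symm.continuous

lemma left_inv_FG : Function.LeftInverse Gc Fc := by
  intro q
  induction q using Quotient.inductionOn with
  | h z =>
    show Gc (f₁ z) = _
    unfold f₁
    rw [Gc_mk]
    unfold g₂
    congr 1
    rw [show ((Φ z).1, (Φ z).2) = Φ z from rfl, Φ.symm_apply_apply]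

lemma right_inv_FG : Function.RightInverse Gc Fc := by
  rintro ⟨q1, v⟩
  induction q1 using QuotientAddGroup.induction_on with
  | H u =>
    rw [Gc_mk]
    show Fc (Quotient.mk _ (Φ.symm (u, v))) = _
    show f₁ (Φ.symm (u, v)) = _
    unfold f₁
    rw [Φ.apply_symm_apply]

def e₁ : Cyl ≃ₜ AddCircle Lp × (Set.Ioo (0 : ℝ) Real.pi) where
  toFun := Fc
  invFun := Gc
  left_inv := left_inv_FG
  right_inv := right_inv_FG
  continuous_toFun := Fc_cont
  continuous_invFun := Gc_cont

/-! ### The interval is homeomorphic to ℝ -/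

def shiftIoo : (Set.Ioo (0 : ℝ) Real.pi) ≃ₜ (Set.Ioo (-(Real.pi/2)) (Real.pi/2)) where
  toFun x := ⟨x.1 - Real.pi/2, ⟨by have := x.2.1; linarith, by have := x.2.2; linarith⟩⟩
  invFun y := ⟨y.1 + Real.pi/2, ⟨by have := y.2.1; linarith, by have := y.2.2; linarith⟩⟩
  left_inv x := by apply Subtype.ext; simp
  right_inv y := by apply Subtype.ext; simp
  continuous_toFun := (continuous_subtype_val.sub continuous_const).subtype_mk _
  continuous_invFun := (continuous_subtype_val.add continuous_const).subtype_mk _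

def iooReal : (Set.Ioo (0 : ℝ) Real.pi) ≃ₜ ℝ :=
  shiftIoo.trans Real.tanOrderIso.toHomeomorph

/-! ### Circle × ℝ ≃ₜ punctured plane -/

def circleProd : Circle × ℝ ≃ₜ ↥({(0 : ℂ)}ᶜ : Set ℂ) where
  toFun p := ⟨((Real.exp p.2 : ℝ) : ℂ) * (p.1 : ℂ), by
    simp only [Set.mem_compl_iff, Set.mem_singleton_iff]
    exact mul_ne_zero (by exact_mod_cast (Real.exp_pos p.2).ne') p.1.coe_ne_zero⟩
  invFun z := (⟨(z : ℂ) / ‖(z : ℂ)‖, mem_sphere_zero_iff_norm.2 (by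
      have hz : (z : ℂ) ≠ 0 := z.2
      rw [norm_div]
      simp only [Complex.norm_real, norm_norm]
      exact div_self (by simpa using hz))⟩,
    Real.log (‖(z : ℂ)‖))
  left_inv p := by
    obtain ⟨c, t⟩ := p
    have habs : ‖((Real.exp t : ℝ) : ℂ) * (c : ℂ)‖ = Real.exp t := by
      rw [norm_mul, Complex.norm_real, Real.norm_of_nonneg (Real.exp_pos t).le, Circle.norm_coe, mul_one]
    refine Prod.ext (Subtype.ext ?_) ?_
    · show (((Real.exp t : ℝ) : ℂ) * (c : ℂ)) / ((‖_‖ : ℝ) : ℂ) = (c : ℂ)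
      rw [habs, mul_comm, mul_div_assoc, div_self (by exact_mod_cast (Real.exp_pos t).ne'),
        mul_one]
    · show Real.log (‖_‖) = t
      rw [habs, Real.log_exp]
  right_inv z := by
    apply Subtype.ext
    have hz : (z : ℂ) ≠ 0 := z.2
    have habs : (0 : ℝ) < ‖(z : ℂ)‖ := norm_pos_iff.mpr hz
    show ((Real.exp (Real.log (‖(z : ℂ)‖)) : ℝ) : ℂ) *
      ((z : ℂ) / ‖(z : ℂ)‖) = z
    rw [Real.exp_log habs, mul_div_assoc', mul_comm, mul_div_assoc,
      div_self (by exact_mod_cast habs.ne'), mul_one]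
  continuous_toFun := by
    apply Continuous.subtype_mk
    exact (Complex.continuous_ofReal.comp (Real.continuous_exp.comp continuous_snd)).mul
      (continuous_subtype_val.comp continuous_fst)
  continuous_invFun := by
    apply Continuous.prodMk
    · apply Continuous.subtype_mk
      apply Continuous.div
      · exact continuous_subtype_val
      · exact Complex.continuous_ofReal.comp (continuous_norm.comp continuous_subtype_val)
      · intro z
        have hz : (z : ℂ) ≠ 0 := z.2
        exact_mod_cast (norm_pos_iff.mpr hz).ne'
    · refine Real.continuousOn_log.comp_continuous
        (continuous_norm.comp continuous_subtype_val) (fun z => ?_)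
      have hz : (z : ℂ) ≠ 0 := z.2
      simp only [Set.mem_compl_iff, Set.mem_singleton_iff, Function.comp_apply]
      exact (norm_pos_iff.mpr hz).ne'

def mainHomeo : Cyl ≃ₜ ↥({(0 : ℂ)}ᶜ : Set ℂ) :=
  e₁.trans (((AddCircle.homeomorphCircle Lp_ne).prodCongr iooReal).trans circleProd)

end Stmt19

/-- `M(3/2,1/12)` is the matrix `!![−18, 323/12; 12, −18]`, and the orbit space of `ℍ` under
the cyclic subgroup it generates is homeomorphic to the punctured plane `ℂ \ {0}`. -/
theorem stmt_19 :
    (g₀ : Matrix (Fin 2) (Fin 2) ℝ) = !![(-18 : ℝ), 323 / 12; 12, -18] ∧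
      Nonempty (Cyl ≃ₜ ↥({(0 : ℂ)}ᶜ : Set ℂ)) := by
  exact ⟨Stmt19.g0_coe, ⟨Stmt19.mainHomeo⟩⟩
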